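/- Let l be a list of length n over a linear order with no duplicate entries. Then for every k : ℕ, the k-fold iterate L^k(l) of the local-minima operation has length at most ⌈n / 2^k⌉; in particular, for every k with 2^k ≥ n, the list L^k(l) has length at most 1 (so at most ⌈log₂ n⌉ of the iterates have more than one entry). -/

import Mathlib

open scoped Classical

/-- An index `i` of the list `l` is a local-minimum index if `l[i] < l[i-1]` whenever
`i > 0` and `l[i] < l[i+1]` whenever `i + 1 < l.length`. -/
def IsLocalMinIdx {α : Type*} [LinearOrder α] (l : List α) (i : ℕ) : Prop :=
  ∃ h : i < l.length,
    (∀ _hi : 0 < i, l[i] < l[i - 1]) ∧ (∀ _hj : i + 1 < l.length, l[i] < l[i + 1])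

/-- The local-minima operation: the sublist of entries of `l` at local-minimum
indices, in order. -/
noncomputable def localMinima {α : Type*} [LinearOrder α] (l : List α) : List α :=
  ((List.finRange l.length).filter fun i => decide (IsLocalMinIdx l i.val)).map l.get

lemma not_adj {α : Type*} [LinearOrder α] {l : List α} {i : ℕ}
    (h1 : IsLocalMinIdx l i) (h2 : IsLocalMinIdx l (i+1)) : False := by
  obtain ⟨hi, _, hr⟩ := h1
  obtain ⟨hj, hl2, _⟩ := h2
  have a := hr hj
  have b := hl2 (Nat.succ_pos i)
  simp at b
  exact absurd a (not_lt.2 b.le)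

lemma len_lm {α : Type*} [LinearOrder α] (l : List α) :
    (localMinima l).length ≤ (l.length + 1) / 2 := by
  classical
  set n := l.length
  have h1 : (localMinima l).length
      = ((List.range n).filter (fun i => decide (IsLocalMinIdx l i))).length := by
    rw [localMinima, List.length_map]
    have : List.range n = (List.finRange n).map Fin.val := by
      simp
    rw [this, List.filter_map, List.length_map]
    rfl
  rw [h1, ← List.countP_eq_length_filter]
  have h2 : List.countP (fun i => decide (IsLocalMinIdx l i)) (List.range n)
      = ((Finset.range n).filter (fun i => IsLocalMinIdx l i)).card := by
    rw [← Nat.count_eq_card_filter_range]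
    rfl
  rw [h2, ← Finset.card_range ((n+1)/2)]
  apply Finset.card_le_card_of_injOn (fun i => i / 2)
  · intro i hi
    simp only [Finset.mem_coe, Finset.mem_filter, Finset.mem_range] at hi ⊢
    omega
  · intro i hi j hj hij
    simp only [Finset.coe_filter, Set.mem_setOf_eq, Finset.mem_range] at hi hj
    have hij' : i / 2 = j / 2 := hij
    by_contra hne
    rcases Nat.lt_or_ge i j with h | h
    · have : j = i + 1 := by omega
      exact not_adj hi.2 (this ▸ hj.2)
    · have : i = j + 1 := by omega
      exact not_adj hj.2 (this ▸ hi.2)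
lemma ceil_step (n a : ℕ) (ha : 0 < a) :
    ((n + a - 1) / a + 1) / 2 ≤ (n + 2 * a - 1) / (2 * a) := by
  rcases Nat.eq_zero_or_pos n with rfl | hn
  · have h0 : (0 + a - 1) / a = 0 := Nat.div_eq_of_lt (by omega)
    rw [h0]
    exact Nat.le_of_lt_succ (Nat.div_lt_self (by omega) one_lt_two) |>.trans (Nat.zero_le _)
  · have h1 : n + a - 1 = (n - 1) + a := by omega
    have h2 : n + 2 * a - 1 = (n - 1) + 2 * a := by omega
    rw [h1, h2, Nat.add_div_right _ ha, Nat.add_div_right _ (by positivity)]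
    have h3 := Nat.div_div_eq_div_mul (n - 1) a 2
    have h4 : a * 2 = 2 * a := by ring
    rw [h4] at h3
    omega

theorem localMinima_iterate_length {α : Type*} [LinearOrder α]
    (l : List α) (hl : l.Nodup) :
    (∀ k : ℕ, (localMinima^[k] l).length ≤ (l.length + 2 ^ k - 1) / 2 ^ k) ∧
    (∀ k : ℕ, l.length ≤ 2 ^ k → (localMinima^[k] l).length ≤ 1) ∧
    {k : ℕ | 1 < (localMinima^[k] l).length}.ncard ≤ Nat.clog 2 l.length := by
  have part1 : ∀ k : ℕ, (localMinima^[k] l).length ≤ (l.length + 2 ^ k - 1) / 2 ^ k := by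
    intro k
    induction k with
    | zero => simp
    | succ k ih =>
      rw [Function.iterate_succ_apply']
      calc (localMinima (localMinima^[k] l)).length
          ≤ ((localMinima^[k] l).length + 1) / 2 := len_lm _
        _ ≤ ((l.length + 2 ^ k - 1) / 2 ^ k + 1) / 2 := Nat.div_le_div_right (by omega)
        _ ≤ (l.length + 2 ^ (k + 1) - 1) / 2 ^ (k + 1) := by
            have hp : 2 ^ (k + 1) = 2 * 2 ^ k := by rw [pow_succ, mul_comm]
            rw [hp]
            exact ceil_step l.length (2 ^ k) (pow_pos (by norm_num) k)
  have part2 : ∀ k : ℕ, l.length ≤ 2 ^ k → (localMinima^[k] l).length ≤ 1 := by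
    intro k hk
    have hp : 0 < 2 ^ k := pow_pos (by norm_num) k
    have h2 : (l.length + 2 ^ k - 1) / 2 ^ k < 2 :=
      (Nat.div_lt_iff_lt_mul hp).2 (by omega)
    have := part1 k
    omega
  refine ⟨part1, part2, ?_⟩
  have hsub : {k : ℕ | 1 < (localMinima^[k] l).length}
      ⊆ ↑(Finset.range (Nat.clog 2 l.length)) := by
    intro k hk
    simp only [Set.mem_setOf_eq] at hk
    simp only [Finset.coe_range, Set.mem_Iio]
    by_contra h
    push_neg at h
    have h1 : l.length ≤ 2 ^ k :=
      le_trans (Nat.le_pow_clog one_lt_two l.length)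
        (Nat.pow_le_pow_right (by norm_num) h)
    have := part2 k h1
    omega
  calc {k : ℕ | 1 < (localMinima^[k] l).length}.ncard
      ≤ (↑(Finset.range (Nat.clog 2 l.length)) : Set ℕ).ncard :=
        Set.ncard_le_ncard hsub (Finset.finite_toSet _)
    _ = Nat.clog 2 l.length := by rw [Set.ncard_coe_finset, Finset.card_range]
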